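/- Let r ≥ 2, and let G_1, ..., G_r be pairwise edge-disjoint graphs on a common vertex set of size n whose edge sets partition the edges of K_n. Then the sum over i of the number of cliques of G_i is at most (r−1)(n+1) + 2^n. -/

import Mathlib

open SimpleGraph Finset

/-- Number of cliques (complete vertex subsets, including the empty set) of `G`. -/
noncomputable def cliqueCount {V : Type*} (G : SimpleGraph V) : ℕ :=
  Nat.card {s : Finset V // G.IsClique (s : Set V)}

/-- Number of independent sets of `G` (cliques of the complement). -/
noncomputable def indepCount {V : Type*} (G : SimpleGraph V) : ℕ :=
  cliqueCount Gᶜ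

theorem sum_cliqueCount_le {V : Type*} [Fintype V] (n r : ℕ) (hr : 2 ≤ r)
    (hn : Fintype.card V = n) (G : Fin r → SimpleGraph V)
    (hdisj : ∀ i j, i ≠ j → ∀ u v, ¬((G i).Adj u v ∧ (G j).Adj u v))
    (hcover : ∀ u v : V, u ≠ v → ∃ i, (G i).Adj u v) :
    ∑ i, cliqueCount (G i) ≤ (r - 1) * (n + 1) + 2 ^ n := by
  classical
  subst hn
  set n := Fintype.card V with hn
  set T : Fin r → Finset (Finset V) :=
    fun i => univ.filter (fun s : Finset V => (G i).IsClique (s : Set V) ∧ 2 ≤ s.card) with hT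
  have hsmall_clique : ∀ (i : Fin r) (s : Finset V), s.card ≤ 1 →
      (G i).IsClique (s : Set V) := by
    intro i s hs u hu v hv huv
    exact absurd (Finset.card_le_one.mp hs u (Finset.mem_coe.mp hu) v (Finset.mem_coe.mp hv)) huv
  have hcard_small : (univ.filter (fun s : Finset V => s.card ≤ 1)).card = n + 1 := by
    have he : univ.filter (fun s : Finset V => s.card ≤ 1)
        = insert (∅ : Finset V) (univ.image fun v : V => ({v} : Finset V)) := by
      ext s
      simp only [mem_filter, mem_univ, true_and, mem_insert, mem_image]
      constructor
      · intro h
        rcases Nat.le_one_iff_eq_zero_or_eq_one.mp h with h0 | h1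
        · left; exact Finset.card_eq_zero.mp h0
        · obtain ⟨a, ha⟩ := Finset.card_eq_one.mp h1
          right; exact ⟨a, ha.symm⟩
      · rintro (rfl | ⟨a, -, rfl⟩) <;> simp
    rw [he, Finset.card_insert_of_notMem (by simp),
      Finset.card_image_of_injective _ (fun a b h => by simpa using h), Finset.card_univ]
  have hcc : ∀ i, cliqueCount (G i) = (n + 1) + (T i).card := by
    intro i
    have h1 : cliqueCount (G i)
        = (univ.filter (fun s : Finset V => (G i).IsClique (s : Set V))).card := by
      rw [cliqueCount, Nat.card_eq_fintype_card, Fintype.card_subtype]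
    have h2 := Finset.card_filter_add_card_filter_not
      (s := univ.filter (fun s : Finset V => (G i).IsClique (s : Set V)))
      (p := fun s : Finset V => s.card ≤ 1)
    have h3 : (univ.filter (fun s : Finset V => (G i).IsClique (s : Set V))).filter
        (fun s => s.card ≤ 1) = univ.filter (fun s : Finset V => s.card ≤ 1) := by
      ext s
      simp only [mem_filter, mem_univ, true_and]
      exact ⟨fun h => h.2, fun h => ⟨hsmall_clique i s h, h⟩⟩
    have h4 : (univ.filter (fun s : Finset V => (G i).IsClique (s : Set V))).filter
        (fun s => ¬ s.card ≤ 1) = T i := by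
      ext s
      simp only [hT, mem_filter, mem_univ, true_and]
      constructor
      · rintro ⟨hc, hb⟩; exact ⟨hc, by omega⟩
      · rintro ⟨hc, hb⟩; exact ⟨hc, by omega⟩
    rw [h1, ← h2, h3, h4, hcard_small]
  have hsum : ∑ i, (T i).card ≤ 2 ^ n - (n + 1) := by
    have hb : ((univ : Finset (Fin r)).biUnion T).card = ∑ i, (T i).card := by
      apply Finset.card_biUnion
      intro i _ j _ hij
      rw [Function.onFun, Finset.disjoint_left]
      intro s hsi hsj
      simp only [hT, mem_filter, mem_univ, true_and] at hsi hsj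
      obtain ⟨hci, hbig⟩ := hsi
      obtain ⟨hcj, -⟩ := hsj
      obtain ⟨u, hu, v, hv, huv⟩ := Finset.one_lt_card.mp hbig
      exact hdisj i j hij u v
        ⟨hci (Finset.mem_coe.mpr hu) (Finset.mem_coe.mpr hv) huv,
         hcj (Finset.mem_coe.mpr hu) (Finset.mem_coe.mpr hv) huv⟩
    have hsub : (univ : Finset (Fin r)).biUnion T
        ⊆ univ.filter (fun s : Finset V => 2 ≤ s.card) := by
      intro s hs
      simp only [mem_biUnion, hT, mem_filter, mem_univ, true_and] at hs ⊢
      obtain ⟨i, hi⟩ := hs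
      exact hi.2
    have hbigcard : (univ.filter (fun s : Finset V => 2 ≤ s.card)).card = 2 ^ n - (n + 1) := by
      have h5 := Finset.card_filter_add_card_filter_not
        (s := (univ : Finset (Finset V))) (p := fun s : Finset V => s.card ≤ 1)
      have h6 : (univ : Finset (Finset V)).card = 2 ^ n := by
        rw [Finset.card_univ, Fintype.card_finset]
      have h7 : univ.filter (fun s : Finset V => ¬ s.card ≤ 1)
          = univ.filter (fun s : Finset V => 2 ≤ s.card) := by
        apply Finset.filter_congr
        intro s _
        constructor <;> (intro; omega)
      rw [h7, hcard_small, h6] at h5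
      omega
    calc ∑ i, (T i).card = ((univ : Finset (Fin r)).biUnion T).card := hb.symm
      _ ≤ (univ.filter (fun s : Finset V => 2 ≤ s.card)).card := Finset.card_le_card hsub
      _ = 2 ^ n - (n + 1) := hbigcard
  have hpow : n + 1 ≤ 2 ^ n := by have := Nat.lt_two_pow_self (n := n); omega
  calc ∑ i, cliqueCount (G i) = ∑ i : Fin r, ((n + 1) + (T i).card) := by
        exact Finset.sum_congr rfl (fun i _ => hcc i)
    _ = r * (n + 1) + ∑ i, (T i).card := by
        rw [Finset.sum_add_distrib, Finset.sum_const, Finset.card_univ, Fintype.card_fin,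
          smul_eq_mul]
    _ ≤ r * (n + 1) + (2 ^ n - (n + 1)) := Nat.add_le_add_left hsum _
    _ ≤ (r - 1) * (n + 1) + 2 ^ n := by
        have h2 : (r - 1) * (n + 1) = r * (n + 1) - (n + 1) := by rw [Nat.sub_one_mul]
        have h3 : n + 1 ≤ r * (n + 1) := Nat.le_mul_of_pos_left _ (by omega)
        omega
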